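/- arXiv:1003.1506 — 2 statements merged into one kernel-verified Lean document; each statement's English description precedes it below -/
import Mathlib

section
/- Suppose J(r) = (1/L) V(|r|/L) where V : [0,∞) → ℝ is Lipschitz continuous with Lipschitz constant ℓ and V(r) = 0 for r > 1, and suppose Q ≤ L. Then for every configuration σ ∈ S_N, |H^l(σ) − H̄^{l,(0)}(F(σ))| ≤ 6 N Q ℓ / L. -/
open Finset

/-- The spin value of a site: `true ↦ +1`, `false ↦ -1`. -/
def spin (b : Bool) : ℤ := if b then 1 else -1

/-- The coarse cell `C_k = {kQ, …, (k+1)Q - 1}` inside the lattice `Fin (M*Q)`. -/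
def cell (M Q : ℕ) (k : Fin M) : Finset (Fin (M * Q)) :=
  univ.filter (fun x => x.val / Q = k.val)

/-- The coarse-graining map `F(σ)(k) = Σ_{x ∈ C_k} σ(x)`. -/
def cg (M Q : ℕ) (σ : Fin (M * Q) → Bool) (k : Fin M) : ℤ :=
  ∑ x ∈ cell M Q k, spin (σ x)

/-- The long-range Hamiltonian `H^l(σ) = -(1/2) Σ_{x ≠ y} J(x-y) σ(x) σ(y)`. -/
noncomputable def Hlong (M Q : ℕ) (J : ℤ → ℝ) (σ : Fin (M * Q) → Bool) : ℝ :=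
  -(1 / 2) * ∑ x : Fin (M * Q), ∑ y ∈ univ.filter (fun y => y ≠ x),
    J ((x.val : ℤ) - (y.val : ℤ)) * (spin (σ x) : ℝ) * (spin (σ y) : ℝ)

/-- Cell-averaged couplings `J̄(k,l)`. -/
noncomputable def Jbar (M Q : ℕ) (J : ℤ → ℝ) (k l : Fin M) : ℝ :=
  if k = l then
    (∑ x ∈ cell M Q k, ∑ y ∈ (cell M Q k).filter (fun y => y ≠ x),
        J ((x.val : ℤ) - (y.val : ℤ))) / ((Q : ℝ) * ((Q : ℝ) - 1))
  else
    (∑ x ∈ cell M Q k, ∑ y ∈ cell M Q l, J ((x.val : ℤ) - (y.val : ℤ))) / ((Q : ℝ) ^ 2)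

/-- The coarse-grained long-range Hamiltonian `H̄^{l,(0)}(η)`. -/
noncomputable def Hlong0 (M Q : ℕ) (J : ℤ → ℝ) (η : Fin M → ℤ) : ℝ :=
  -(1 / 2) * (∑ k : Fin M, ∑ l ∈ univ.filter (fun l => l ≠ k),
      Jbar M Q J k l * (η k : ℝ) * (η l : ℝ))
  - (1 / 2) * ∑ k : Fin M, Jbar M Q J k k * ((η k : ℝ) ^ 2 - (Q : ℝ))

lemma spin_mul_self (b : Bool) : (spin b : ℝ) * spin b = 1 := by
  cases b <;> simp [spin]

lemma abs_spin (b : Bool) : |(spin b : ℝ)| = 1 := by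
  cases b <;> simp [spin]

lemma mem_cell_iff {M Q : ℕ} (hQ : 0 < Q) {k : Fin M} {x : Fin (M * Q)} :
    x ∈ cell M Q k ↔ k.val * Q ≤ x.val ∧ x.val < k.val * Q + Q := by
  simp only [cell, mem_filter, mem_univ, true_and]
  constructor
  · intro h
    refine ⟨?_, ?_⟩
    · calc k.val * Q = x.val / Q * Q := by rw [h]
        _ ≤ x.val := Nat.div_mul_le_self _ _
    · have h2 : x.val / Q < k.val + 1 := by omega
      have h3 := (Nat.div_lt_iff_lt_mul hQ).mp h2
      rw [Nat.add_mul, Nat.one_mul] at h3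
      omega
  · intro ⟨h1, h2⟩
    exact Nat.div_eq_of_lt_le h1 (by rw [Nat.add_mul, Nat.one_mul]; omega)

lemma cell_card {M Q : ℕ} (hQ : 0 < Q) (k : Fin M) : (cell M Q k).card = Q := by
  have hN : 0 < M * Q := Nat.mul_pos k.pos hQ
  have h : (cell M Q k).card = (Finset.Ico (k.val * Q) (k.val * Q + Q)).card := by
    apply Finset.card_nbij' (fun x => x.val) (fun n => ⟨n % (M * Q), Nat.mod_lt _ hN⟩)
    · intro a ha
      rw [Finset.mem_coe, mem_cell_iff hQ] at ha
      simp [Finset.mem_Ico]; omega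
    · intro n hn
      simp only [Finset.coe_Ico, Set.mem_Ico] at hn
      have hlt : n < M * Q := by
        have : k.val + 1 ≤ M := k.isLt
        calc n < k.val * Q + Q := hn.2
          _ = (k.val + 1) * Q := by ring
          _ ≤ M * Q := Nat.mul_le_mul_right _ this
      rw [Finset.mem_coe, mem_cell_iff hQ]
      simp [Nat.mod_eq_of_lt hlt]; omega
    · intro a ha
      ext
      simp [Nat.mod_eq_of_lt a.isLt]
    · intro n hn
      simp only [Finset.coe_Ico, Set.mem_Ico] at hn
      have hlt : n < M * Q := by
        have : k.val + 1 ≤ M := k.isLt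
        calc n < k.val * Q + Q := hn.2
          _ = (k.val + 1) * Q := by ring
          _ ≤ M * Q := Nat.mul_le_mul_right _ this
      simp [Nat.mod_eq_of_lt hlt]
  rw [h, Nat.card_Ico]; omega

lemma cell_dist {M Q : ℕ} (hQ : 0 < Q) {k : Fin M} {x x' : Fin (M * Q)}
    (hx : x ∈ cell M Q k) (hx' : x' ∈ cell M Q k) :
    |(x.val : ℤ) - (x'.val : ℤ)| ≤ (Q : ℤ) - 1 := by
  rw [mem_cell_iff hQ] at hx hx'
  rw [abs_le]
  omega

lemma count_near {N : ℕ} (x : Fin N) (n : ℤ) (hn : 0 ≤ n) :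
    (((univ.filter (fun y : Fin N => y ≠ x)).filter
        (fun y => |(x.val : ℤ) - (y.val : ℤ)| ≤ n)).card : ℤ) ≤ 2 * n := by
  have hsub : ∀ y ∈ (univ.filter (fun y : Fin N => y ≠ x)).filter
      (fun y => |(x.val : ℤ) - (y.val : ℤ)| ≤ n),
      ((y.val : ℤ)) ∈ (Finset.Icc ((x.val : ℤ) - n) ((x.val : ℤ) + n)).erase (x.val : ℤ) := by
    intro y hy
    simp only [mem_filter, mem_univ, true_and] at hy
    rw [Finset.mem_erase, Finset.mem_Icc]
    have h1 : (y.val : ℤ) ≠ (x.val : ℤ) := by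
      intro h
      exact hy.1 (Fin.ext (by exact_mod_cast h))
    have h2 := hy.2
    rw [abs_le] at h2
    exact ⟨h1, by omega, by omega⟩
  have hinj : Set.InjOn (fun y : Fin N => (y.val : ℤ))
      ((univ.filter (fun y : Fin N => y ≠ x)).filter
        (fun y => |(x.val : ℤ) - (y.val : ℤ)| ≤ n)) := by
    intro a _ b _ hab
    simp only at hab
    exact Fin.ext (by exact_mod_cast hab)
  have hcard := Finset.card_le_card_of_injOn _ hsub hinj
  have hx : (x.val : ℤ) ∈ Finset.Icc ((x.val : ℤ) - n) ((x.val : ℤ) + n) := by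
    rw [Finset.mem_Icc]; omega
  rw [Finset.card_erase_of_mem hx, Int.card_Icc] at hcard
  omega

lemma avg_bound {γ : Type*} (s : Finset γ) (a : ℝ) (F : γ → ℝ) (b D : ℝ) (hb : 0 ≤ b)
    (hD : (s.card : ℝ) = D) (hD0 : 0 < D)
    (h : ∀ z ∈ s, |a - F z| ≤ b) :
    |a - (∑ z ∈ s, F z) / D| ≤ b := by
  have key : a - (∑ z ∈ s, F z) / D = (∑ z ∈ s, (a - F z)) / D := by
    rw [Finset.sum_sub_distrib, Finset.sum_const, nsmul_eq_mul, hD]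
    field_simp
  rw [key, abs_div, abs_of_pos hD0, div_le_iff₀ hD0]
  calc |∑ z ∈ s, (a - F z)| ≤ ∑ z ∈ s, |a - F z| := Finset.abs_sum_le_sum_abs _ _
    _ ≤ ∑ _z ∈ s, b := Finset.sum_le_sum h
    _ = s.card * b := by rw [Finset.sum_const, nsmul_eq_mul]
    _ = b * D := by rw [hD, mul_comm]

/-- for a compactly supported Lipschitz long-range potential and `Q ≤ L`,
the coarse-graining error of the long-range Hamiltonian is at most `6NQℓ/L`. -/
theorem statement7 (M Q : ℕ) (hM : 1 ≤ M) (hQ : 2 ≤ Q)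
    (L l : ℝ) (hL : 0 < L) (hl : 0 ≤ l) (hQL : (Q : ℝ) ≤ L)
    (V : ℝ → ℝ) (hV : ∀ a b : ℝ, 0 ≤ a → 0 ≤ b → |V a - V b| ≤ l * |a - b|)
    (hVsupp : ∀ r : ℝ, 1 < r → V r = 0)
    (J : ℤ → ℝ) (hJ : ∀ r : ℤ, J r = (1 / L) * V (|(r : ℝ)| / L)) :
    ∀ σ : Fin (M * Q) → Bool,
      |Hlong M Q J σ - Hlong0 M Q J (cg M Q σ)| ≤ 6 * ((M * Q : ℕ) : ℝ) * Q * l / L := by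
  intro σ
  have hQ0 : 0 < Q := by omega
  have hQR : (2 : ℝ) ≤ (Q : ℝ) := by exact_mod_cast hQ
  -- J is Lipschitz with constant l / L ^ 2
  have hJlip : ∀ r r' : ℤ, |J r - J r'| ≤ l / L ^ 2 * |(r : ℝ) - (r' : ℝ)| := by
    intro r r'
    rw [hJ r, hJ r', ← mul_sub, abs_mul, abs_of_pos (by positivity : (0:ℝ) < 1 / L)]
    have h2 := hV (|(r : ℝ)| / L) (|(r' : ℝ)| / L) (by positivity) (by positivity)
    have h3 : |(|(r : ℝ)| / L - |(r' : ℝ)| / L)| ≤ |(r : ℝ) - (r' : ℝ)| / L := by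
      rw [div_sub_div_same, abs_div, abs_of_pos hL]
      exact (div_le_div_iff_of_pos_right hL).mpr (abs_abs_sub_abs_le_abs_sub _ _)
    calc 1 / L * |V (|(r : ℝ)| / L) - V (|(r' : ℝ)| / L)|
        ≤ 1 / L * (l * |(|(r : ℝ)| / L - |(r' : ℝ)| / L)|) := by
          apply mul_le_mul_of_nonneg_left h2 (by positivity)
      _ ≤ 1 / L * (l * (|(r : ℝ) - (r' : ℝ)| / L)) := by
          apply mul_le_mul_of_nonneg_left (mul_le_mul_of_nonneg_left h3 hl) (by positivity)
      _ = l / L ^ 2 * |(r : ℝ) - (r' : ℝ)| := by ring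
  -- J has support in [-L, L]
  have hJsupp : ∀ r : ℤ, L < |(r : ℝ)| → J r = 0 := by
    intro r hr
    rw [hJ r, hVsupp _ ((one_lt_div hL).mpr hr), mul_zero]
  -- index of the cell of a site
  have hidx : ∀ x : Fin (M * Q), x.val / Q < M := fun x =>
    (Nat.div_lt_iff_lt_mul hQ0).mpr x.isLt
  set idx : Fin (M * Q) → Fin M := fun x => ⟨x.val / Q, hidx x⟩ with hidxdef
  have hmemcell : ∀ x : Fin (M * Q), x ∈ cell M Q (idx x) := by
    intro x; simp [cell, hidxdef]
  have hcellfilter : ∀ k : Fin M, cell M Q k = univ.filter (fun x => idx x = k) := by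
    intro k; ext x; simp [cell, hidxdef, Fin.ext_iff]
  have hidxmem : ∀ (k : Fin M) (x : Fin (M * Q)), x ∈ cell M Q k → idx x = k := by
    intro k x hx
    rw [hcellfilter] at hx
    exact (Finset.mem_filter.mp hx).2
  -- constants
  set c : ℝ := 2 * (Q : ℝ) * l / L ^ 2 with hc
  have hc0 : 0 ≤ c := by positivity
  set n₀ : ℤ := ⌊L⌋ + 2 * (Q : ℤ) with hn₀
  have hQZ : (Q : ℤ) ≤ ⌊L⌋ := Int.le_floor.mpr (by exact_mod_cast hQL)
  have hn₀0 : 0 ≤ n₀ := by omega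
  -- per-term bound
  have hterm : ∀ x y x' y' : Fin (M * Q), x' ∈ cell M Q (idx x) → y' ∈ cell M Q (idx y) →
      |J ((x.val : ℤ) - y.val) - J ((x'.val : ℤ) - y'.val)|
        ≤ if |(x.val : ℤ) - (y.val : ℤ)| ≤ n₀ then c else 0 := by
    intro x y x' y' hx' hy'
    have hxx' := cell_dist hQ0 (hmemcell x) hx'
    have hyy' := cell_dist hQ0 (hmemcell y) hy'
    by_cases hnear : |(x.val : ℤ) - (y.val : ℤ)| ≤ n₀
    · rw [if_pos hnear]
      have h1 := hJlip ((x.val : ℤ) - y.val) ((x'.val : ℤ) - y'.val)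
      have hxr : |((x.val : ℤ) : ℝ) - ((x'.val : ℤ) : ℝ)| ≤ (Q : ℝ) - 1 := by
        have h := hxx'
        push_cast at h ⊢
        exact_mod_cast h
      have hyr : |((y.val : ℤ) : ℝ) - ((y'.val : ℤ) : ℝ)| ≤ (Q : ℝ) - 1 := by
        have h := hyy'
        push_cast at h ⊢
        exact_mod_cast h
      have h2 : |((((x.val : ℤ) - y.val) : ℤ) : ℝ) - ((((x'.val : ℤ) - y'.val) : ℤ) : ℝ)|
          ≤ 2 * (Q : ℝ) := by
        have heq : ((((x.val : ℤ) - y.val) : ℤ) : ℝ) - ((((x'.val : ℤ) - y'.val) : ℤ) : ℝ)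
            = (((x.val : ℤ) : ℝ) - ((x'.val : ℤ) : ℝ)) - (((y.val : ℤ) : ℝ) - ((y'.val : ℤ) : ℝ)) := by
          push_cast; ring
        rw [heq]
        calc |(((x.val : ℤ) : ℝ) - ((x'.val : ℤ) : ℝ)) - (((y.val : ℤ) : ℝ) - ((y'.val : ℤ) : ℝ))|
            ≤ |((x.val : ℤ) : ℝ) - ((x'.val : ℤ) : ℝ)| + |((y.val : ℤ) : ℝ) - ((y'.val : ℤ) : ℝ)| :=
              abs_sub _ _
          _ ≤ ((Q : ℝ) - 1) + ((Q : ℝ) - 1) := add_le_add hxr hyr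
          _ ≤ 2 * (Q : ℝ) := by linarith
      calc |J ((x.val : ℤ) - y.val) - J ((x'.val : ℤ) - y'.val)|
          ≤ l / L ^ 2 * |((((x.val : ℤ) - y.val) : ℤ) : ℝ) - ((((x'.val : ℤ) - y'.val) : ℤ) : ℝ)| := h1
        _ ≤ l / L ^ 2 * (2 * (Q : ℝ)) := mul_le_mul_of_nonneg_left h2 (by positivity)
        _ = c := by rw [hc]; ring
    · rw [if_neg hnear]
      push_neg at hnear
      have hint : n₀ + 1 ≤ |(x.val : ℤ) - (y.val : ℤ)| := hnear
      have hLfl : L < (⌊L⌋ : ℝ) + 1 := Int.lt_floor_add_one L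
      have hfar1 : L < |(((x.val : ℤ) - y.val : ℤ) : ℝ)| := by
        rw [← Int.cast_abs]
        calc L < (⌊L⌋ : ℝ) + 1 := hLfl
          _ ≤ ((n₀ + 1 : ℤ) : ℝ) := by
              rw [hn₀]
              push_cast
              have hq0 : (0:ℝ) ≤ (Q:ℝ) := by positivity
              linarith
          _ ≤ ((|(x.val : ℤ) - (y.val : ℤ)| : ℤ) : ℝ) := Int.cast_le.mpr hint
      have htri : |(x.val : ℤ) - (y.val : ℤ)|
          ≤ |(x'.val : ℤ) - (y'.val : ℤ)| + (|(x.val : ℤ) - (x'.val : ℤ)| + |(y.val : ℤ) - (y'.val : ℤ)|) := by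
        calc |(x.val : ℤ) - (y.val : ℤ)|
            = |((x'.val : ℤ) - (y'.val : ℤ)) + (((x.val : ℤ) - (x'.val : ℤ)) - ((y.val : ℤ) - (y'.val : ℤ)))| := by
              congr 1; ring
          _ ≤ |(x'.val : ℤ) - (y'.val : ℤ)| + |((x.val : ℤ) - (x'.val : ℤ)) - ((y.val : ℤ) - (y'.val : ℤ))| :=
              abs_add_le _ _
          _ ≤ |(x'.val : ℤ) - (y'.val : ℤ)| + (|(x.val : ℤ) - (x'.val : ℤ)| + |(y.val : ℤ) - (y'.val : ℤ)|) := by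
              gcongr
              exact abs_sub _ _
      have hint2 : ⌊L⌋ + 3 ≤ |(x'.val : ℤ) - (y'.val : ℤ)| := by omega
      have hfar2 : L < |(((x'.val : ℤ) - y'.val : ℤ) : ℝ)| := by
        rw [← Int.cast_abs]
        calc L < (⌊L⌋ : ℝ) + 1 := hLfl
          _ ≤ ((⌊L⌋ + 3 : ℤ) : ℝ) := by push_cast; linarith
          _ ≤ ((|(x'.val : ℤ) - (y'.val : ℤ)| : ℤ) : ℝ) := Int.cast_le.mpr hint2
      rw [hJsupp _ hfar1, hJsupp _ hfar2, sub_zero, abs_zero]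
  -- pointwise bound against the cell average
  have key : ∀ x y : Fin (M * Q),
      |J ((x.val : ℤ) - y.val) - Jbar M Q J (idx x) (idx y)|
        ≤ if |(x.val : ℤ) - (y.val : ℤ)| ≤ n₀ then c else 0 := by
    intro x y
    have hbnd : (0:ℝ) ≤ (if |(x.val : ℤ) - (y.val : ℤ)| ≤ n₀ then c else 0) := by
      split <;> simp [hc0]
    by_cases hkl : idx x = idx y
    · -- diagonal case
      set P := ((cell M Q (idx x)) ×ˢ (cell M Q (idx x))).filter (fun z => z.2 ≠ z.1) with hP
      have hsum : (∑ a ∈ cell M Q (idx x), ∑ b ∈ (cell M Q (idx x)).filter (fun y => y ≠ a),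
          J ((a.val : ℤ) - b.val)) = ∑ z ∈ P, J ((z.1.val : ℤ) - z.2.val) := by
        rw [hP, Finset.sum_filter, Finset.sum_product]
        exact Finset.sum_congr rfl (fun a _ => by rw [Finset.sum_filter])
      have hPcard : (P.card : ℝ) = (Q : ℝ) * ((Q : ℝ) - 1) := by
        have h1 : P.card = ∑ a ∈ cell M Q (idx x), ((cell M Q (idx x)).filter (fun b => b ≠ a)).card := by
          rw [hP, Finset.card_filter, Finset.sum_product]
          exact Finset.sum_congr rfl (fun a _ => by rw [Finset.card_filter])
        have h2 : ∀ a ∈ cell M Q (idx x), ((cell M Q (idx x)).filter (fun b => b ≠ a)).card = Q - 1 := by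
          intro a ha
          rw [Finset.filter_ne', Finset.card_erase_of_mem ha, cell_card hQ0]
        rw [h1, Finset.sum_congr rfl h2, Finset.sum_const, cell_card hQ0, smul_eq_mul]
        have : (1:ℕ) ≤ Q := by omega
        push_cast [Nat.cast_sub this]
        ring
      have hJb : Jbar M Q J (idx x) (idx y)
          = (∑ z ∈ P, J ((z.1.val : ℤ) - z.2.val)) / ((Q : ℝ) * ((Q : ℝ) - 1)) := by
        rw [Jbar, if_pos hkl, hsum]
      rw [hJb]
      apply avg_bound _ _ _ _ _ hbnd hPcard (by nlinarith [hQR])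
      intro z hz
      rw [hP, Finset.mem_filter, Finset.mem_product] at hz
      exact hterm x y z.1 z.2 hz.1.1 (hkl ▸ hz.1.2)
    · -- off-diagonal case
      set P := (cell M Q (idx x)) ×ˢ (cell M Q (idx y)) with hP
      have hsum : (∑ a ∈ cell M Q (idx x), ∑ b ∈ cell M Q (idx y),
          J ((a.val : ℤ) - b.val)) = ∑ z ∈ P, J ((z.1.val : ℤ) - z.2.val) := by
        rw [hP, Finset.sum_product]
      have hPcard : (P.card : ℝ) = (Q : ℝ) ^ 2 := by
        rw [hP, Finset.card_product, cell_card hQ0, cell_card hQ0]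
        push_cast; ring
      have hJb : Jbar M Q J (idx x) (idx y)
          = (∑ z ∈ P, J ((z.1.val : ℤ) - z.2.val)) / ((Q : ℝ) ^ 2) := by
        rw [Jbar, if_neg hkl, hsum]
      rw [hJb]
      apply avg_bound _ _ _ _ _ hbnd hPcard (by positivity)
      intro z hz
      rw [hP, Finset.mem_product] at hz
      exact hterm x y z.1 z.2 hz.1 hz.2
  -- expand the coarse Hamiltonian over sites
  have hcg : ∀ k : Fin M, ((cg M Q σ k : ℤ) : ℝ) = ∑ x ∈ cell M Q k, ((spin (σ x) : ℤ) : ℝ) := by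
    intro k
    rw [cg]
    push_cast
    rfl
  have hstep1 : ∀ (k : Fin M) (x : Fin (M * Q)),
      (∑ l : Fin M, ∑ y ∈ (cell M Q l).filter (fun y => y ≠ x),
          Jbar M Q J k l * ((spin (σ x) : ℤ) : ℝ) * ((spin (σ y) : ℤ) : ℝ))
        = ∑ y ∈ univ.filter (fun y => y ≠ x),
            Jbar M Q J k (idx y) * ((spin (σ x) : ℤ) : ℝ) * ((spin (σ y) : ℤ) : ℝ) := by
    intro k x
    rw [← Finset.sum_fiberwise (univ.filter (fun y => y ≠ x)) idx
          (fun y => Jbar M Q J k (idx y) * ((spin (σ x) : ℤ) : ℝ) * ((spin (σ y) : ℤ) : ℝ))]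
    apply Finset.sum_congr rfl
    intro l _
    have hset : (univ.filter (fun y : Fin (M * Q) => y ≠ x)).filter (fun y => idx y = l)
        = (cell M Q l).filter (fun y => y ≠ x) := by
      ext y
      simp only [Finset.mem_filter, Finset.mem_univ, true_and, hcellfilter l]
      tauto
    rw [hset]
    apply Finset.sum_congr rfl
    intro y hy
    have hyl : idx y = l := hidxmem l y (Finset.mem_filter.mp hy).1
    rw [hyl]
  have hstep2 : (∑ k : Fin M, ∑ x ∈ cell M Q k,
        ∑ y ∈ univ.filter (fun y => y ≠ x),
          Jbar M Q J k (idx y) * ((spin (σ x) : ℤ) : ℝ) * ((spin (σ y) : ℤ) : ℝ))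
      = ∑ x : Fin (M * Q), ∑ y ∈ univ.filter (fun y => y ≠ x),
          Jbar M Q J (idx x) (idx y) * ((spin (σ x) : ℤ) : ℝ) * ((spin (σ y) : ℤ) : ℝ) := by
    rw [← Finset.sum_fiberwise univ idx (fun x => ∑ y ∈ univ.filter (fun y => y ≠ x),
          Jbar M Q J (idx x) (idx y) * ((spin (σ x) : ℤ) : ℝ) * ((spin (σ y) : ℤ) : ℝ))]
    apply Finset.sum_congr rfl
    intro k _
    have : (univ.filter (fun x : Fin (M * Q) => idx x = k)) = cell M Q k := (hcellfilter k).symm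
    rw [this]
    apply Finset.sum_congr rfl
    intro x hx
    rw [hidxmem k x hx]
  have hsq : ∀ k : Fin M, ((cg M Q σ k : ℤ) : ℝ) ^ 2 - (Q : ℝ)
      = ∑ x ∈ cell M Q k, ∑ y ∈ (cell M Q k).filter (fun y => y ≠ x),
          ((spin (σ x) : ℤ) : ℝ) * ((spin (σ y) : ℤ) : ℝ) := by
    intro k
    rw [hcg k, sq, Finset.sum_mul_sum]
    have h2 : ∀ x ∈ cell M Q k, (∑ y ∈ cell M Q k, ((spin (σ x) : ℤ) : ℝ) * ((spin (σ y) : ℤ) : ℝ))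
        = ((spin (σ x) : ℤ) : ℝ) * ((spin (σ x) : ℤ) : ℝ)
          + ∑ y ∈ (cell M Q k).filter (fun y => y ≠ x),
              ((spin (σ x) : ℤ) : ℝ) * ((spin (σ y) : ℤ) : ℝ) := by
      intro x hx
      rw [Finset.filter_ne']
      exact (Finset.add_sum_erase _ (fun y => ((spin (σ x) : ℤ) : ℝ) * ((spin (σ y) : ℤ) : ℝ)) hx).symm
    rw [Finset.sum_congr rfl h2, Finset.sum_add_distrib]
    have h3 : (∑ x ∈ cell M Q k, ((spin (σ x) : ℤ) : ℝ) * ((spin (σ x) : ℤ) : ℝ)) = (Q : ℝ) := by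
      rw [Finset.sum_congr rfl (fun x _ => spin_mul_self (σ x)), Finset.sum_const,
        cell_card hQ0, nsmul_eq_mul, mul_one]
    rw [h3]
    ring
  have hoff : ∀ k l : Fin M, l ≠ k →
      Jbar M Q J k l * ((cg M Q σ k : ℤ) : ℝ) * ((cg M Q σ l : ℤ) : ℝ)
        = ∑ x ∈ cell M Q k, ∑ y ∈ (cell M Q l).filter (fun y => y ≠ x),
            Jbar M Q J k l * ((spin (σ x) : ℤ) : ℝ) * ((spin (σ y) : ℤ) : ℝ) := by
    intro k l hlk
    have hfull : ∀ x ∈ cell M Q k, (cell M Q l).filter (fun y => y ≠ x) = cell M Q l := by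
      intro x hx
      apply Finset.filter_true_of_mem
      intro y hy hyx
      exact hlk ((hidxmem l y hy).symm.trans (hyx ▸ hidxmem k x hx))
    rw [hcg k, hcg l]
    calc Jbar M Q J k l * (∑ x ∈ cell M Q k, ((spin (σ x) : ℤ) : ℝ))
            * (∑ y ∈ cell M Q l, ((spin (σ y) : ℤ) : ℝ))
        = ∑ x ∈ cell M Q k, ∑ y ∈ cell M Q l,
            Jbar M Q J k l * ((spin (σ x) : ℤ) : ℝ) * ((spin (σ y) : ℤ) : ℝ) := by
          rw [mul_assoc, Finset.sum_mul_sum, Finset.mul_sum]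
          refine Finset.sum_congr rfl fun x _ => ?_
          rw [Finset.mul_sum]
          exact Finset.sum_congr rfl fun y _ => by ring
      _ = _ := Finset.sum_congr rfl (fun x hx => by rw [hfull x hx])
  have hId : Hlong0 M Q J (cg M Q σ)
      = -(1/2) * ∑ x : Fin (M * Q), ∑ y ∈ univ.filter (fun y => y ≠ x),
          Jbar M Q J (idx x) (idx y) * ((spin (σ x) : ℤ) : ℝ) * ((spin (σ y) : ℤ) : ℝ) := by
    have hdiag : ∀ k : Fin M,
        Jbar M Q J k k * (((cg M Q σ k : ℤ) : ℝ) ^ 2 - (Q : ℝ))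
          = ∑ x ∈ cell M Q k, ∑ y ∈ (cell M Q k).filter (fun y => y ≠ x),
              Jbar M Q J k k * ((spin (σ x) : ℤ) : ℝ) * ((spin (σ y) : ℤ) : ℝ) := by
      intro k
      rw [hsq k, Finset.mul_sum]
      refine Finset.sum_congr rfl fun x _ => ?_
      rw [Finset.mul_sum]
      exact Finset.sum_congr rfl fun y _ => by ring
    rw [Hlong0]
    calc -(1 / 2) * (∑ k : Fin M, ∑ l ∈ univ.filter (fun l => l ≠ k),
            Jbar M Q J k l * ((cg M Q σ k : ℤ) : ℝ) * ((cg M Q σ l : ℤ) : ℝ))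
          - 1 / 2 * ∑ k : Fin M, Jbar M Q J k k * (((cg M Q σ k : ℤ) : ℝ) ^ 2 - (Q : ℝ))
        = -(1/2) * ((∑ k : Fin M, ∑ l ∈ univ.filter (fun l => l ≠ k),
              ∑ x ∈ cell M Q k, ∑ y ∈ (cell M Q l).filter (fun y => y ≠ x),
                Jbar M Q J k l * ((spin (σ x) : ℤ) : ℝ) * ((spin (σ y) : ℤ) : ℝ))
            + ∑ k : Fin M,
              ∑ x ∈ cell M Q k, ∑ y ∈ (cell M Q k).filter (fun y => y ≠ x),
                Jbar M Q J k k * ((spin (σ x) : ℤ) : ℝ) * ((spin (σ y) : ℤ) : ℝ)) := by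
          rw [Finset.sum_congr rfl (fun k _ => Finset.sum_congr rfl
            (fun l hl => hoff k l (by simpa using hl)))]
          rw [Finset.sum_congr rfl (fun k _ => hdiag k)]
          ring
      _ = -(1/2) * (∑ k : Fin M, ∑ l : Fin M,
              ∑ x ∈ cell M Q k, ∑ y ∈ (cell M Q l).filter (fun y => y ≠ x),
                Jbar M Q J k l * ((spin (σ x) : ℤ) : ℝ) * ((spin (σ y) : ℤ) : ℝ)) := by
          rw [← Finset.sum_add_distrib]
          congr 1
          refine Finset.sum_congr rfl fun k _ => ?_
          rw [Finset.filter_ne']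
          exact Finset.sum_erase_add _ _ (Finset.mem_univ k)
      _ = -(1/2) * (∑ k : Fin M, ∑ x ∈ cell M Q k,
              ∑ y ∈ univ.filter (fun y => y ≠ x),
                Jbar M Q J k (idx y) * ((spin (σ x) : ℤ) : ℝ) * ((spin (σ y) : ℤ) : ℝ)) := by
          congr 1
          refine Finset.sum_congr rfl fun k _ => ?_
          rw [Finset.sum_comm]
          exact Finset.sum_congr rfl fun x _ => hstep1 k x
      _ = _ := by rw [hstep2]
  -- difference as a single sum
  have hmain : Hlong M Q J σ - Hlong0 M Q J (cg M Q σ)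
      = -(1/2) * ∑ x : Fin (M * Q), ∑ y ∈ univ.filter (fun y => y ≠ x),
          (J ((x.val : ℤ) - y.val) - Jbar M Q J (idx x) (idx y))
            * ((spin (σ x) : ℤ) : ℝ) * ((spin (σ y) : ℤ) : ℝ) := by
    rw [Hlong, hId, ← mul_sub, ← Finset.sum_sub_distrib]
    congr 1
    refine Finset.sum_congr rfl fun x _ => ?_
    rw [← Finset.sum_sub_distrib]
    exact Finset.sum_congr rfl fun y _ => by ring
  rw [hmain, abs_mul, abs_neg, abs_div]
  have h12 : |(1:ℝ)| / |(2:ℝ)| = 1/2 := by norm_num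
  rw [h12]
  -- bound the sum
  have hS : |∑ x : Fin (M * Q), ∑ y ∈ univ.filter (fun y => y ≠ x),
        (J ((x.val : ℤ) - y.val) - Jbar M Q J (idx x) (idx y))
          * ((spin (σ x) : ℤ) : ℝ) * ((spin (σ y) : ℤ) : ℝ)|
      ≤ ((M * Q : ℕ) : ℝ) * (2 * (n₀ : ℝ) * c) := by
    calc |∑ x : Fin (M * Q), ∑ y ∈ univ.filter (fun y => y ≠ x),
          (J ((x.val : ℤ) - y.val) - Jbar M Q J (idx x) (idx y))
            * ((spin (σ x) : ℤ) : ℝ) * ((spin (σ y) : ℤ) : ℝ)|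
        ≤ ∑ x : Fin (M * Q), |∑ y ∈ univ.filter (fun y => y ≠ x),
            (J ((x.val : ℤ) - y.val) - Jbar M Q J (idx x) (idx y))
              * ((spin (σ x) : ℤ) : ℝ) * ((spin (σ y) : ℤ) : ℝ)| :=
          Finset.abs_sum_le_sum_abs _ _
      _ ≤ ∑ x : Fin (M * Q), ∑ y ∈ univ.filter (fun y => y ≠ x),
            |(J ((x.val : ℤ) - y.val) - Jbar M Q J (idx x) (idx y))
              * ((spin (σ x) : ℤ) : ℝ) * ((spin (σ y) : ℤ) : ℝ)| :=
          Finset.sum_le_sum fun x _ => Finset.abs_sum_le_sum_abs _ _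
      _ = ∑ x : Fin (M * Q), ∑ y ∈ univ.filter (fun y => y ≠ x),
            |(J ((x.val : ℤ) - y.val) - Jbar M Q J (idx x) (idx y))| := by
          refine Finset.sum_congr rfl fun x _ => Finset.sum_congr rfl fun y _ => ?_
          rw [abs_mul, abs_mul, abs_spin, abs_spin, mul_one, mul_one]
      _ ≤ ∑ x : Fin (M * Q), ∑ y ∈ univ.filter (fun y => y ≠ x),
            (if |(x.val : ℤ) - (y.val : ℤ)| ≤ n₀ then c else 0) :=
          Finset.sum_le_sum fun x _ => Finset.sum_le_sum fun y _ => key x y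
      _ = ∑ x : Fin (M * Q),
            (((univ.filter (fun y : Fin (M * Q) => y ≠ x)).filter
              (fun y => |(x.val : ℤ) - (y.val : ℤ)| ≤ n₀)).card : ℝ) * c := by
          refine Finset.sum_congr rfl fun x _ => ?_
          rw [Finset.sum_ite, Finset.sum_const, Finset.sum_const, smul_zero, add_zero,
            nsmul_eq_mul]
      _ ≤ ∑ _x : Fin (M * Q), 2 * (n₀ : ℝ) * c := by
          refine Finset.sum_le_sum fun x _ => ?_
          have h1 := count_near x n₀ hn₀0
          have h2 : (((univ.filter (fun y : Fin (M * Q) => y ≠ x)).filter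
              (fun y => |(x.val : ℤ) - (y.val : ℤ)| ≤ n₀)).card : ℝ) ≤ 2 * (n₀ : ℝ) := by
            exact_mod_cast h1
          exact mul_le_mul_of_nonneg_right h2 hc0
      _ = ((M * Q : ℕ) : ℝ) * (2 * (n₀ : ℝ) * c) := by
          rw [Finset.sum_const, Finset.card_univ, Fintype.card_fin, nsmul_eq_mul]
  calc (1:ℝ)/2 * |∑ x : Fin (M * Q), ∑ y ∈ univ.filter (fun y => y ≠ x),
        (J ((x.val : ℤ) - y.val) - Jbar M Q J (idx x) (idx y))
          * ((spin (σ x) : ℤ) : ℝ) * ((spin (σ y) : ℤ) : ℝ)|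
      ≤ 1/2 * (((M * Q : ℕ) : ℝ) * (2 * (n₀ : ℝ) * c)) := by
        exact mul_le_mul_of_nonneg_left hS (by norm_num)
    _ ≤ 1/2 * (((M * Q : ℕ) : ℝ) * (2 * (3 * L) * c)) := by
        have hn₀L : (n₀ : ℝ) ≤ 3 * L := by
          rw [hn₀]
          push_cast
          have hfl : (⌊L⌋ : ℝ) ≤ L := Int.floor_le L
          linarith
        have hNn : (0:ℝ) ≤ ((M * Q : ℕ) : ℝ) := by positivity
        have : 2 * (n₀ : ℝ) * c ≤ 2 * (3 * L) * c := by
          apply mul_le_mul_of_nonneg_right _ hc0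
          linarith
        nlinarith
    _ = 6 * ((M * Q : ℕ) : ℝ) * (Q : ℝ) * l / L := by
        rw [hc]
        field_simp
        ring
end

section
/- In the single-cell nearest-neighbour setting, assume |λ| < 1 and let s₋, s₊ ∈ {−1,+1}. Then the partition-function ratio f^s(η; s₋, s₊) := Z(η; s₋, s₊) Z(η; 0, 0) / ( Z(η; 0, s₊) Z(η; s₋, 0) ) − 1 is well defined (the denominators are nonzero) and satisfies the exact identity f^s(η; s₋, s₊) = λ² s₋ s₊ ( Φ^{1,Q}(η) − Φ^1(η) Φ^Q(η) ) / ( (1 − λ s₋ Φ^1(η)) (1 − λ s₊ Φ^Q(η)) ). -/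
open Finset

/-- Configurations of a `Q`-site cell with total magnetization `η`. -/
def cellSet (Q : ℕ) (η : ℤ) : Finset (Fin Q → Bool) :=
  univ.filter (fun τ => ∑ i, spin (τ i) = η)

/-- The first site of the cell. -/
def site1 (Q : ℕ) (hQ : 0 < Q) : Fin Q := ⟨0, hQ⟩

/-- The last site of the cell. -/
def siteQ (Q : ℕ) (hQ : 0 < Q) : Fin Q := ⟨Q - 1, Nat.sub_lt hQ one_pos⟩

/-- The internal nearest-neighbour Hamiltonian `h(τ) = K Σ_{i=1}^{Q-1} τ(i) τ(i+1)`. -/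
noncomputable def hcell (K : ℝ) (Q : ℕ) (τ : Fin Q → Bool) : ℝ :=
  K * ∑ i : Fin (Q - 1),
    ((spin (τ ⟨i.val, by have := i.isLt; omega⟩) : ℝ) *
     (spin (τ ⟨i.val + 1, by have := i.isLt; omega⟩) : ℝ))

/-- The free-boundary single-cell partition function `Ẑ(η)`. -/
noncomputable def Zhat (β K : ℝ) (Q : ℕ) (η : ℤ) : ℝ :=
  ∑ τ ∈ cellSet Q η, Real.exp (-β * hcell K Q τ)

/-- `Φ^1(η)`: expectation of the first spin under `P̂_η`. -/
noncomputable def Phi1 (β K : ℝ) (Q : ℕ) (hQ : 0 < Q) (η : ℤ) : ℝ :=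
  (∑ τ ∈ cellSet Q η, (spin (τ (site1 Q hQ)) : ℝ) * Real.exp (-β * hcell K Q τ)) /
    Zhat β K Q η

/-- `Φ^Q(η)`: expectation of the last spin under `P̂_η`. -/
noncomputable def PhiQ (β K : ℝ) (Q : ℕ) (hQ : 0 < Q) (η : ℤ) : ℝ :=
  (∑ τ ∈ cellSet Q η, (spin (τ (siteQ Q hQ)) : ℝ) * Real.exp (-β * hcell K Q τ)) /
    Zhat β K Q η

/-- `Φ^{1,Q}(η)`: expectation of the product of the endpoint spins under `P̂_η`. -/
noncomputable def Phi1Q (β K : ℝ) (Q : ℕ) (hQ : 0 < Q) (η : ℤ) : ℝ :=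
  (∑ τ ∈ cellSet Q η,
      ((spin (τ (site1 Q hQ)) * spin (τ (siteQ Q hQ)) : ℤ) : ℝ) *
        Real.exp (-β * hcell K Q τ)) /
    Zhat β K Q η

/-- The single-cell partition function with boundary conditions `s₋, s₊ ∈ {-1,0,+1}`
(`0` encoding a free boundary). -/
noncomputable def ZB (β K : ℝ) (Q : ℕ) (hQ : 0 < Q) (η : ℤ) (sm sp : ℝ) : ℝ :=
  ∑ τ ∈ cellSet Q η,
    Real.exp (-β * (K * sm * (spin (τ (site1 Q hQ)) : ℝ) + hcell K Q τ +
      K * (spin (τ (siteQ Q hQ)) : ℝ) * sp))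

lemma expfac (x ε : ℝ) (hε : ε = 1 ∨ ε = -1) :
    Real.exp (-(x * ε)) = Real.cosh x * (1 - Real.tanh x * ε) := by
  have hc : Real.cosh x ≠ 0 := (Real.cosh_pos x).ne'
  rcases hε with h | h <;> subst h
  · rw [Real.tanh_eq_sinh_div_cosh]
    field_simp
    rw [Real.cosh_sub_sinh]
  · rw [Real.tanh_eq_sinh_div_cosh]
    field_simp
    rw [sub_neg_eq_add, Real.cosh_add_sinh]

lemma card_lt (Q k : ℕ) (hk : k ≤ Q) :
    (univ.filter fun i : Fin Q => i.val < k).card = k := by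
  have : (univ.filter fun i : Fin Q => i.val < k) = Finset.map (Fin.castLEEmb hk) univ := by
    ext i
    simp only [mem_filter, mem_univ, true_and, Finset.mem_map, Fin.castLEEmb_apply]
    constructor
    · intro h; exact ⟨⟨i.val, h⟩, by simp [Fin.ext_iff]⟩
    · rintro ⟨j, rfl⟩; simpa using j.isLt
  rw [this, Finset.card_map, Finset.card_univ, Fintype.card_fin]

lemma cell_nonempty (Q : ℕ) (hQ : 0 < Q) (η : ℤ) (hη : |η| ≤ (Q : ℤ))
    (hpar : (η + Q) % 2 = 0) : (cellSet Q η).Nonempty := by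
  obtain ⟨k, hkQ, hk⟩ : ∃ k : ℕ, k ≤ Q ∧ 2 * (k : ℤ) - Q = η := by
    have := abs_le.mp hη; refine ⟨((η + Q) / 2).toNat, by omega, by omega⟩
  refine ⟨fun i => decide (i.val < k), ?_⟩
  simp only [cellSet, mem_filter, mem_univ, true_and]
  have : ∀ i : Fin Q, spin (decide (i.val < k)) = if i.val < k then (1:ℤ) else -1 := by
    intro i; by_cases h : i.val < k <;> simp [spin, h]
  rw [Finset.sum_congr rfl fun i _ => this i, Finset.sum_ite, Finset.sum_const,
    Finset.sum_const, card_lt Q k hkQ]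
  have : (univ.filter fun i : Fin Q => ¬ i.val < k).card = Q - k := by
    have := Finset.card_filter_add_card_filter_not (s := (univ : Finset (Fin Q)))
      (p := fun i : Fin Q => i.val < k)
    simp [card_lt Q k hkQ] at this ⊢
    omega
  rw [this]
  simp only [nsmul_eq_mul, mul_one, mul_neg_one]
  omega

section Aux
variable (β K : ℝ) (Q : ℕ) (hQ : 0 < Q) (η : ℤ)

lemma pm_spin (b : Bool) : (spin b : ℝ) = 1 ∨ (spin b : ℝ) = -1 := by
  cases b <;> simp [spin]

lemma pm_mul (a b : ℝ) (ha : a = 1 ∨ a = -1) (hb : b = 1 ∨ b = -1) :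
    a * b = 1 ∨ a * b = -1 := by
  rcases ha with h | h <;> rcases hb with h' | h' <;> subst h <;> subst h' <;> norm_num

/-- numerator sums -/
noncomputable def T1 : ℝ :=
  ∑ τ ∈ cellSet Q η, (spin (τ (site1 Q hQ)) : ℝ) * Real.exp (-β * hcell K Q τ)

noncomputable def TQ : ℝ :=
  ∑ τ ∈ cellSet Q η, (spin (τ (siteQ Q hQ)) : ℝ) * Real.exp (-β * hcell K Q τ)

noncomputable def T1Q : ℝ :=
  ∑ τ ∈ cellSet Q η,
    (spin (τ (site1 Q hQ)) : ℝ) * (spin (τ (siteQ Q hQ)) : ℝ) * Real.exp (-β * hcell K Q τ)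

lemma Phi1_eq : Phi1 β K Q hQ η = T1 β K Q hQ η / Zhat β K Q η := rfl

lemma PhiQ_eq : PhiQ β K Q hQ η = TQ β K Q hQ η / Zhat β K Q η := rfl

lemma Phi1Q_eq : Phi1Q β K Q hQ η = T1Q β K Q hQ η / Zhat β K Q η := by
  unfold Phi1Q T1Q
  congr 1
  refine Finset.sum_congr rfl fun τ _ => ?_
  push_cast
  ring

lemma ZB_00 : ZB β K Q hQ η 0 0 = Zhat β K Q η := by
  unfold ZB Zhat
  refine Finset.sum_congr rfl fun τ _ => ?_
  norm_num

lemma ZB_0p (sp : ℝ) (hsp : sp = 1 ∨ sp = -1) :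
    ZB β K Q hQ η 0 sp =
      Real.cosh (β * K) * Zhat β K Q η
        - Real.cosh (β * K) * Real.tanh (β * K) * sp * TQ β K Q hQ η := by
  unfold ZB Zhat TQ
  rw [Finset.mul_sum, Finset.mul_sum, ← Finset.sum_sub_distrib]
  refine Finset.sum_congr rfl fun τ _ => ?_
  set σ := (spin (τ (siteQ Q hQ)) : ℝ) with hσ
  have hε : σ * sp = 1 ∨ σ * sp = -1 := pm_mul _ _ (pm_spin _) hsp
  have h1 : -β * (K * 0 * (spin (τ (site1 Q hQ)) : ℝ) + hcell K Q τ + K * σ * sp)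
      = (-β * hcell K Q τ) + -((β * K) * (σ * sp)) := by ring
  rw [h1, Real.exp_add, expfac _ _ hε]
  ring

lemma ZB_m0 (sm : ℝ) (hsm : sm = 1 ∨ sm = -1) :
    ZB β K Q hQ η sm 0 =
      Real.cosh (β * K) * Zhat β K Q η
        - Real.cosh (β * K) * Real.tanh (β * K) * sm * T1 β K Q hQ η := by
  unfold ZB Zhat T1
  rw [Finset.mul_sum, Finset.mul_sum, ← Finset.sum_sub_distrib]
  refine Finset.sum_congr rfl fun τ _ => ?_
  set σ := (spin (τ (site1 Q hQ)) : ℝ) with hσ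
  have hε : sm * σ = 1 ∨ sm * σ = -1 := pm_mul _ _ hsm (pm_spin _)
  have h1 : -β * (K * sm * σ + hcell K Q τ + K * (spin (τ (siteQ Q hQ)) : ℝ) * 0)
      = (-β * hcell K Q τ) + -((β * K) * (sm * σ)) := by ring
  rw [h1, Real.exp_add, expfac _ _ hε]
  ring

lemma ZB_mm (sm sp : ℝ) (hsm : sm = 1 ∨ sm = -1) (hsp : sp = 1 ∨ sp = -1) :
    ZB β K Q hQ η sm sp =
      Real.cosh (β * K) ^ 2 * Zhat β K Q η
        - Real.cosh (β * K) ^ 2 * Real.tanh (β * K) * sm * T1 β K Q hQ η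
        - Real.cosh (β * K) ^ 2 * Real.tanh (β * K) * sp * TQ β K Q hQ η
        + Real.cosh (β * K) ^ 2 * Real.tanh (β * K) ^ 2 * sm * sp * T1Q β K Q hQ η := by
  unfold ZB Zhat T1 TQ T1Q
  rw [Finset.mul_sum, Finset.mul_sum, Finset.mul_sum, Finset.mul_sum,
    ← Finset.sum_sub_distrib, ← Finset.sum_sub_distrib, ← Finset.sum_add_distrib]
  refine Finset.sum_congr rfl fun τ _ => ?_
  set σ1 := (spin (τ (site1 Q hQ)) : ℝ) with hσ1
  set σQ := (spin (τ (siteQ Q hQ)) : ℝ) with hσQ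
  have hε1 : sm * σ1 = 1 ∨ sm * σ1 = -1 := pm_mul _ _ hsm (pm_spin _)
  have hεQ : σQ * sp = 1 ∨ σQ * sp = -1 := pm_mul _ _ (pm_spin _) hsp
  have h1 : -β * (K * sm * σ1 + hcell K Q τ + K * σQ * sp)
      = -((β * K) * (sm * σ1)) + ((-β * hcell K Q τ) + -((β * K) * (σQ * sp))) := by ring
  rw [h1, Real.exp_add, Real.exp_add, expfac _ _ hε1, expfac _ _ hεQ]
  ring

lemma abs_T1_le : |T1 β K Q hQ η| ≤ Zhat β K Q η := by
  refine le_trans (Finset.abs_sum_le_sum_abs _ _) (le_of_eq ?_)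
  refine Finset.sum_congr rfl fun τ _ => ?_
  rw [abs_mul, abs_of_pos (Real.exp_pos _)]
  rcases pm_spin (τ (site1 Q hQ)) with h | h <;> rw [h] <;> norm_num

lemma abs_TQ_le : |TQ β K Q hQ η| ≤ Zhat β K Q η := by
  refine le_trans (Finset.abs_sum_le_sum_abs _ _) (le_of_eq ?_)
  refine Finset.sum_congr rfl fun τ _ => ?_
  rw [abs_mul, abs_of_pos (Real.exp_pos _)]
  rcases pm_spin (τ (siteQ Q hQ)) with h | h <;> rw [h] <;> norm_num

lemma Zhat_pos (hQ2 : 0 < Q) (hη : |η| ≤ (Q : ℤ)) (hpar : (η + Q) % 2 = 0) : 0 < Zhat β K Q η :=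
  Finset.sum_pos (fun τ _ => Real.exp_pos _) (cell_nonempty Q hQ2 η hη hpar)

end Aux

/-- exact identity for the short-range error term `f^s` in terms of the
endpoint correlation functions, with `λ = tanh(βK)`. -/
theorem statement14 (β K : ℝ) (hβ : 0 < β) (Q : ℕ) (hQ : 2 ≤ Q)
    (η : ℤ) (hη : |η| ≤ (Q : ℤ)) (hpar : (η + Q) % 2 = 0)
    (hlam : |Real.tanh (β * K)| < 1)
    (sm sp : ℝ) (hsm : sm = 1 ∨ sm = -1) (hsp : sp = 1 ∨ sp = -1) :
    ZB β K Q (by omega) η 0 sp ≠ 0 ∧ ZB β K Q (by omega) η sm 0 ≠ 0 ∧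
    ZB β K Q (by omega) η sm sp * ZB β K Q (by omega) η 0 0 /
        (ZB β K Q (by omega) η 0 sp * ZB β K Q (by omega) η sm 0) - 1
      = Real.tanh (β * K) ^ 2 * sm * sp *
          (Phi1Q β K Q (by omega) η - Phi1 β K Q (by omega) η * PhiQ β K Q (by omega) η) /
        ((1 - Real.tanh (β * K) * sm * Phi1 β K Q (by omega) η) *
         (1 - Real.tanh (β * K) * sp * PhiQ β K Q (by omega) η)) := by
  have hQ0 : 0 < Q := by omega
  set c := Real.cosh (β * K) with hc
  set l := Real.tanh (β * K) with hl
  set Z := Zhat β K Q η with hZ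
  set A := T1 β K Q hQ0 η with hA
  set B := TQ β K Q hQ0 η with hB
  set C := T1Q β K Q hQ0 η with hC
  have hcpos : 0 < c := Real.cosh_pos _
  have hZpos : 0 < Z := Zhat_pos β K Q η hQ0 hη hpar
  have habsm : |sm| = 1 := by rcases hsm with h | h <;> rw [h] <;> norm_num
  have habsp : |sp| = 1 := by rcases hsp with h | h <;> rw [h] <;> norm_num
  have hD1 : 0 < Z - l * sm * A := by
    have h1 : |l * sm * A| < Z := by
      rw [abs_mul, abs_mul, habsm, mul_one]
      calc |l| * |A| ≤ |l| * Z := by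
            exact mul_le_mul_of_nonneg_left (abs_T1_le β K Q hQ0 η) (abs_nonneg l)
        _ < 1 * Z := by exact mul_lt_mul_of_pos_right hlam hZpos
        _ = Z := one_mul Z
    have := (abs_lt.mp h1).2
    linarith
  have hD2 : 0 < Z - l * sp * B := by
    have h1 : |l * sp * B| < Z := by
      rw [abs_mul, abs_mul, habsp, mul_one]
      calc |l| * |B| ≤ |l| * Z := by
            exact mul_le_mul_of_nonneg_left (abs_TQ_le β K Q hQ0 η) (abs_nonneg l)
        _ < 1 * Z := by exact mul_lt_mul_of_pos_right hlam hZpos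
        _ = Z := one_mul Z
    have := (abs_lt.mp h1).2
    linarith
  have e0p : ZB β K Q hQ0 η 0 sp = c * Z - c * l * sp * B := ZB_0p β K Q hQ0 η sp hsp
  have em0 : ZB β K Q hQ0 η sm 0 = c * Z - c * l * sm * A := ZB_m0 β K Q hQ0 η sm hsm
  have emm : ZB β K Q hQ0 η sm sp
      = c ^ 2 * Z - c ^ 2 * l * sm * A - c ^ 2 * l * sp * B + c ^ 2 * l ^ 2 * sm * sp * C :=
    ZB_mm β K Q hQ0 η sm sp hsm hsp
  have e00 : ZB β K Q hQ0 η 0 0 = Z := ZB_00 β K Q hQ0 η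
  have ep1 : Phi1 β K Q hQ0 η = A / Z := Phi1_eq β K Q hQ0 η
  have epQ : PhiQ β K Q hQ0 η = B / Z := PhiQ_eq β K Q hQ0 η
  have ep1Q : Phi1Q β K Q hQ0 η = C / Z := Phi1Q_eq β K Q hQ0 η
  refine ⟨?_, ?_, ?_⟩
  · rw [e0p]
    have : c * Z - c * l * sp * B = c * (Z - l * sp * B) := by ring
    rw [this]
    exact mul_ne_zero hcpos.ne' hD2.ne'
  · rw [em0]
    have : c * Z - c * l * sm * A = c * (Z - l * sm * A) := by ring
    rw [this]
    exact mul_ne_zero hcpos.ne' hD1.ne'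
  · rw [e0p, em0, emm, e00, ep1, epQ, ep1Q]
    have k1 : 1 - l * sm * (A / Z) = (Z - l * sm * A) / Z := by field_simp
    have k2 : 1 - l * sp * (B / Z) = (Z - l * sp * B) / Z := by field_simp
    have k3 : c * Z - c * l * sp * B = c * (Z - l * sp * B) := by ring
    have k4 : c * Z - c * l * sm * A = c * (Z - l * sm * A) := by ring
    rw [k1, k2, k3, k4]
    field_simp
    ring
end
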